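/- For all real numbers A and B with cosh(B) > 1 (i.e. B ≠ 0) and such that the integrand is defined (cosh(A) ≥ 1, and cosh(A) - x > 0, cosh(B) - x > 0 for all x ∈ [-1,1], i.e. A ≠ 0 and B ≠ 0), one has sinh(B) · ∫_{-1}^{1} (cosh(A) - x)^{-1/2} / (cosh(B) - x)^{3/2} dx = 2 / sinh((A+B)/2), provided sinh((A+B)/2) ≠ 0 and sinh(B) > 0. -/

import Mathlib

open Real intervalIntegral

/-- Derivative of √(a-x)/√(b-x). -/
lemma sqrt_ratio_deriv (a b x : ℝ) (hax : x < a) (hbx : x < b) :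
    HasDerivAt (fun y => Real.sqrt (a - y) / Real.sqrt (b - y))
      ((a - b) / (2 * (Real.sqrt (a - x) * ((b - x) * Real.sqrt (b - x))))) x := by
  have ha0 : (0:ℝ) < a - x := by linarith
  have hb0 : (0:ℝ) < b - x := by linarith
  have hsa0 : 0 < Real.sqrt (a - x) := Real.sqrt_pos.mpr ha0
  have hsb0 : 0 < Real.sqrt (b - x) := Real.sqrt_pos.mpr hb0
  have h1 : HasDerivAt (fun y : ℝ => a - y) (-1) x := by
    simpa using (hasDerivAt_id x).const_sub a
  have h2 : HasDerivAt (fun y : ℝ => b - y) (-1) x := by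
    simpa using (hasDerivAt_id x).const_sub b
  have hA' : HasDerivAt (fun y => Real.sqrt (a - y)) (1 / (2 * Real.sqrt (a - x)) * (-1)) x :=
    (Real.hasDerivAt_sqrt ha0.ne').comp x h1
  have hB' : HasDerivAt (fun y => Real.sqrt (b - y)) (1 / (2 * Real.sqrt (b - x)) * (-1)) x :=
    (Real.hasDerivAt_sqrt hb0.ne').comp x h2
  have h := hA'.div hB' hsb0.ne'
  refine h.congr_deriv ?_
  symm
  have hsa2 : Real.sqrt (a - x) * Real.sqrt (a - x) = a - x := Real.mul_self_sqrt ha0.le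
  have hsb2 : Real.sqrt (b - x) * Real.sqrt (b - x) = b - x := Real.mul_self_sqrt hb0.le
  have hab : a - b = Real.sqrt (a - x) * Real.sqrt (a - x)
      - Real.sqrt (b - x) * Real.sqrt (b - x) := by rw [hsa2, hsb2]; ring
  field_simp
  linear_combination (-(b - x)) * hsa2 + (a - x) * hsb2

set_option maxHeartbeats 1000000 in
theorem bundling_integral_identity (A B : ℝ) (hA : 0 < A) (hB : 0 < B)
    (hAB : Real.sinh ((A + B) / 2) ≠ 0) (hsB : 0 < Real.sinh B) :
    Real.sinh B *
      ∫ x in (-1 : ℝ)..1,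
        (Real.cosh A - x) ^ (-(1 : ℝ) / 2) / (Real.cosh B - x) ^ ((3 : ℝ) / 2)
      = 2 / Real.sinh ((A + B) / 2) := by
  have hA2 : 0 < A / 2 := by linarith
  have hB2 : 0 < B / 2 := by linarith
  set u := Real.sinh (A / 2) with hu_def
  set v := Real.cosh (A / 2) with hv_def
  set p := Real.sinh (B / 2) with hp_def
  set q := Real.cosh (B / 2) with hq_def
  set a := Real.cosh A with ha_def
  set b := Real.cosh B with hb_def
  have hu : 0 < u := Real.sinh_pos_iff.mpr hA2
  have hp : 0 < p := Real.sinh_pos_iff.mpr hB2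
  have hv : 0 < v := Real.cosh_pos _
  have hq : 0 < q := Real.cosh_pos _
  have hv2 : v ^ 2 = u ^ 2 + 1 := Real.cosh_sq _
  have hq2 : q ^ 2 = p ^ 2 + 1 := Real.cosh_sq _
  have ha : a = u ^ 2 + v ^ 2 := by
    rw [ha_def, show A = 2 * (A / 2) by ring, Real.cosh_two_mul]; ring
  have hb : b = p ^ 2 + q ^ 2 := by
    rw [hb_def, show B = 2 * (B / 2) by ring, Real.cosh_two_mul]; ring
  have hsB' : Real.sinh B = 2 * p * q := by
    rw [show B = 2 * (B / 2) by ring, Real.sinh_two_mul]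
  have hs2 : Real.sinh ((A + B) / 2) = u * q + v * p := by
    rw [show (A + B) / 2 = A / 2 + B / 2 by ring, Real.sinh_add]
  have h1a : (1:ℝ) < a := by nlinarith
  have h1b : (1:ℝ) < b := by nlinarith
  set g : ℝ → ℝ := fun x => 1 / (Real.sqrt (a - x) * ((b - x) * Real.sqrt (b - x)))
    with hg_def
  have hcong : Set.EqOn
      (fun x => (a - x) ^ (-(1:ℝ) / 2) / (b - x) ^ ((3:ℝ) / 2)) g
      (Set.uIcc (-1:ℝ) 1) := by
    intro x hx
    rw [Set.uIcc_of_le (by norm_num : (-1:ℝ) ≤ 1)] at hx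
    obtain ⟨hx1, hx2⟩ := hx
    have hax : 0 < a - x := by linarith
    have hbx : 0 < b - x := by linarith
    have hsa : 0 < Real.sqrt (a - x) := Real.sqrt_pos.mpr hax
    have hsb : 0 < Real.sqrt (b - x) := Real.sqrt_pos.mpr hbx
    show (a - x) ^ (-(1:ℝ) / 2) / (b - x) ^ ((3:ℝ) / 2) = _
    rw [show (-(1:ℝ) / 2) = -(1 / 2) by norm_num, Real.rpow_neg hax.le,
      show ((3:ℝ) / 2) = 1 + 1 / 2 by norm_num, Real.rpow_add hbx,
      Real.rpow_one, ← Real.sqrt_eq_rpow, ← Real.sqrt_eq_rpow, hg_def]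
    show (Real.sqrt (a - x))⁻¹ / ((b - x) * Real.sqrt (b - x)) =
      1 / (Real.sqrt (a - x) * ((b - x) * Real.sqrt (b - x)))
    rw [one_div, div_eq_mul_inv, ← mul_inv]
  have hg_cont : ContinuousOn g (Set.uIcc (-1:ℝ) 1) := by
    apply ContinuousOn.div continuousOn_const
    · exact (continuousOn_const.sub continuousOn_id).sqrt.mul
        ((continuousOn_const.sub continuousOn_id).mul
          (continuousOn_const.sub continuousOn_id).sqrt)
    · intro x hx
      rw [Set.uIcc_of_le (by norm_num : (-1:ℝ) ≤ 1)] at hx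
      obtain ⟨hx1, hx2⟩ := hx
      have hax : 0 < a - x := by linarith
      have hbx : 0 < b - x := by linarith
      have hsa : 0 < Real.sqrt (a - x) := Real.sqrt_pos.mpr hax
      have hsb : 0 < Real.sqrt (b - x) := Real.sqrt_pos.mpr hbx
      positivity
  have hgint : IntervalIntegrable g MeasureTheory.volume (-1:ℝ) 1 :=
    hg_cont.intervalIntegrable
  rw [intervalIntegral.integral_congr hcong]
  have hpos : 0 < u * q + v * p := by positivity
  by_cases hab : a = b
  · -- symmetric case A = B
    have hup2 : u ^ 2 = p ^ 2 := by nlinarith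
    have hup : u = p := by nlinarith [sq_nonneg (u - p), sq_nonneg (u + p)]
    have hvq : v = q := by nlinarith [sq_nonneg (v - q), sq_nonneg (v + q)]
    have key : ∀ x ∈ Set.uIcc (-1:ℝ) 1, HasDerivAt (fun y => (b - y)⁻¹) (g x) x := by
      intro x hx
      rw [Set.uIcc_of_le (by norm_num : (-1:ℝ) ≤ 1)] at hx
      obtain ⟨hx1, hx2⟩ := hx
      have hbx : 0 < b - x := by linarith
      have h1 : HasDerivAt (fun y : ℝ => b - y) (-1) x := by
        simpa using (hasDerivAt_id x).const_sub b
      have h2 := h1.inv hbx.ne'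
      refine h2.congr_deriv ?_
      symm
      have hsb2 : Real.sqrt (b - x) * Real.sqrt (b - x) = b - x :=
        Real.mul_self_sqrt hbx.le
      have hsb : 0 < Real.sqrt (b - x) := Real.sqrt_pos.mpr hbx
      rw [hg_def]
      simp only [hab]
      field_simp
      linear_combination (-1 : ℝ) * hsb2
    have hint : ∫ x in (-1:ℝ)..1, g x = (b - 1)⁻¹ - (b - (-1))⁻¹ :=
      integral_eq_sub_of_hasDerivAt key hgint
    rw [hint, hsB', hs2, hup, hvq, hb]
    rw [show p ^ 2 + q ^ 2 - 1 = 2 * p ^ 2 by linarith,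
      show p ^ 2 + q ^ 2 - (-1:ℝ) = 2 * q ^ 2 by linarith]
    field_simp
    linear_combination 2 * hq2
  · -- a ≠ b
    have habd : a - b = 2 * ((u * q - v * p) * (u * q + v * p)) := by
      have h' : u ^ 2 - p ^ 2 = (u * q - v * p) * (u * q + v * p) := by
        linear_combination (-u ^ 2) * hq2 + p ^ 2 * hv2
      rw [ha, hb, ← h']
      linarith
    have hne2 : u * q - v * p ≠ 0 := by
      intro h
      apply hab
      have : a - b = 0 := by rw [habd, h]; ring
      linarith
    set F : ℝ → ℝ := fun y => (2 / (a - b)) * (Real.sqrt (a - y) / Real.sqrt (b - y))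
      with hF_def
    have key : ∀ x ∈ Set.uIcc (-1:ℝ) 1, HasDerivAt F (g x) x := by
      intro x hx
      rw [Set.uIcc_of_le (by norm_num : (-1:ℝ) ≤ 1)] at hx
      obtain ⟨hx1, hx2⟩ := hx
      have hax : (x:ℝ) < a := by linarith
      have hbx : (x:ℝ) < b := by linarith
      have h := (sqrt_ratio_deriv a b x hax hbx).const_mul (2 / (a - b))
      refine h.congr_deriv ?_
      symm
      have hsa : 0 < Real.sqrt (a - x) := Real.sqrt_pos.mpr (by linarith)
      have hsb : 0 < Real.sqrt (b - x) := Real.sqrt_pos.mpr (by linarith)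
      have habne : a - b ≠ 0 := sub_ne_zero.mpr hab
      have habne2 : (2:ℝ) * (a - b) ≠ 0 := mul_ne_zero two_ne_zero habne
      rw [hg_def]
      show 1 / (Real.sqrt (a - x) * ((b - x) * Real.sqrt (b - x))) = _
      rw [div_mul_div_comm,
        show (a - b) * (2 * (Real.sqrt (a - x) * ((b - x) * Real.sqrt (b - x))))
          = (2 * (a - b)) * (Real.sqrt (a - x) * ((b - x) * Real.sqrt (b - x))) by ring,
        div_mul_cancel_left₀ habne2, one_div]
    have hint : ∫ x in (-1:ℝ)..1, g x = F 1 - F (-1) :=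
      integral_eq_sub_of_hasDerivAt key hgint
    have s1 : Real.sqrt (a - 1) = Real.sqrt 2 * u := by
      rw [show a - 1 = 2 * u ^ 2 by linarith, Real.sqrt_mul (by norm_num : (0:ℝ) ≤ 2),
        Real.sqrt_sq hu.le]
    have s2 : Real.sqrt (a + 1) = Real.sqrt 2 * v := by
      rw [show a + 1 = 2 * v ^ 2 by linarith, Real.sqrt_mul (by norm_num : (0:ℝ) ≤ 2),
        Real.sqrt_sq hv.le]
    have s3 : Real.sqrt (b - 1) = Real.sqrt 2 * p := by
      rw [show b - 1 = 2 * p ^ 2 by linarith, Real.sqrt_mul (by norm_num : (0:ℝ) ≤ 2),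
        Real.sqrt_sq hp.le]
    have s4 : Real.sqrt (b + 1) = Real.sqrt 2 * q := by
      rw [show b + 1 = 2 * q ^ 2 by linarith, Real.sqrt_mul (by norm_num : (0:ℝ) ≤ 2),
        Real.sqrt_sq hq.le]
    rw [hint, hF_def]
    simp only [show (b - (-1:ℝ)) = b + 1 by ring, show (a - (-1:ℝ)) = a + 1 by ring]
    rw [s1, s2, s3, s4, habd, hsB', hs2]
    have hs2ne : Real.sqrt 2 ≠ 0 := by positivity
    field_simp
    exact div_self (by intro h; apply hne2; linarith)
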